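/- Let m : [0,∞) → ℝ be continuous with m(t) > 0 for every t ≥ 0, and suppose that the map t ↦ m(t)/t is strictly decreasing on (0,∞). Then the function L(t) := (1/2)M(t) − (1/4)m(t)t is strictly increasing on [0,∞); in particular L(t) > L(0) = 0 for every t > 0. -/

import Mathlib

open intervalIntegral Set

theorem stmt_0 (m : ℝ → ℝ)
    (hm_cont : ContinuousOn m (Set.Ici 0))
    (hm_pos : ∀ t : ℝ, 0 ≤ t → 0 < m t)
    (hm_dec : StrictAntiOn (fun t => m t / t) (Set.Ioi (0 : ℝ)))
    (M L : ℝ → ℝ)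
    (hM : ∀ t : ℝ, M t = ∫ τ in (0:ℝ)..t, m τ)
    (hL : ∀ t : ℝ, L t = (1/2) * M t - (1/4) * m t * t) :
    StrictMonoOn L (Set.Ici 0) ∧ L 0 = 0 ∧ ∀ t : ℝ, 0 < t → 0 < L t := by
  have hL0 : L 0 = 0 := by
    rw [hL 0, hM 0, intervalIntegral.integral_same]; ring
  have hint : ∀ a b : ℝ, 0 ≤ a → 0 ≤ b → IntervalIntegrable m MeasureTheory.volume a b := by
    intro a b ha hb
    apply (hm_cont.mono _).intervalIntegrable
    intro x hx
    rcases le_or_gt a b with h | h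
    · rw [Set.uIcc_of_le h] at hx; exact le_trans ha hx.1
    · rw [Set.uIcc_of_ge h.le] at hx; exact le_trans hb hx.1
  have hmono : StrictMonoOn L (Set.Ici 0) := by
    intro s hs t ht hst
    have hs0 : (0:ℝ) ≤ s := hs
    have ht0 : (0:ℝ) < t := lt_of_le_of_lt hs0 hst
    set c : ℝ := m t / t with hc
    have hc_pos : 0 < c := div_pos (hm_pos t ht0.le) ht0
    -- integrability
    have hi_st : IntervalIntegrable m MeasureTheory.volume s t := hint s t hs0 ht0.le
    have hi_0s : IntervalIntegrable m MeasureTheory.volume 0 s := hint 0 s le_rfl hs0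
    have hi_lin : IntervalIntegrable (fun τ : ℝ => τ * c) MeasureTheory.volume s t :=
      (continuous_id.mul continuous_const).intervalIntegrable s t
    -- positivity of the difference integral
    have hpos : 0 < ∫ τ in s..t, (m τ - τ * c) := by
      apply intervalIntegral.intervalIntegral_pos_of_pos_on (hi_st.sub hi_lin) _ hst
      intro τ hτ
      have hτ0 : 0 < τ := lt_of_le_of_lt hs0 hτ.1
      have hd : m t / t < m τ / τ := hm_dec (Set.mem_Ioi.mpr hτ0) (Set.mem_Ioi.mpr ht0) hτ.2
      have : τ * c < m τ := by
        rw [hc, mul_div_assoc'] -- τ * (m t / t) = τ * m t / t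
        rw [div_lt_iff₀ ht0]
        have := (div_lt_div_iff₀ ht0 hτ0).mp hd
        nlinarith
      linarith
    have hsplit : (∫ τ in s..t, (m τ - τ * c)) =
        (∫ τ in s..t, m τ) - (∫ τ in s..t, τ * c) := by
      exact intervalIntegral.integral_sub hi_st hi_lin
    have hlin : (∫ τ in s..t, τ * c) = (t^2 - s^2) / 2 * c := by
      rw [intervalIntegral.integral_mul_const, integral_id]
    have hMst : M t - M s = ∫ τ in s..t, m τ := by
      rw [hM t, hM s, ← intervalIntegral.integral_add_adjacent_intervals hi_0s hi_st]
      ring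
    have hIm : (t^2 - s^2) / 2 * c < ∫ τ in s..t, m τ := by
      rw [hsplit, hlin] at hpos; linarith
    -- m s * s ≥ c * s^2
    have htail : c * s^2 ≤ m s * s := by
      rcases eq_or_lt_of_le hs0 with h | h
      · simp [← h]
      · have hd : m t / t < m s / s := hm_dec (Set.mem_Ioi.mpr h) (Set.mem_Ioi.mpr ht0) hst
        have h1 := (div_lt_div_iff₀ ht0 h).mp hd
        have h2 : c * t = m t := div_mul_cancel₀ _ ht0.ne'
        nlinarith [mul_pos h ht0]
    have hct : c * t^2 = m t * t := by
      rw [hc, sq, ← mul_assoc, div_mul_cancel₀ _ ht0.ne']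
    rw [hL s, hL t]
    nlinarith [hIm, htail, hMst]
  refine ⟨hmono, hL0, fun t ht => ?_⟩
  have := hmono (Set.self_mem_Ici) (Set.mem_Ici.mpr ht.le) ht
  linarith [hL0 ▸ this]
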